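/- For any backward trie with n ≥ 3 nodes, its suffix tree has at most 2n − 3 nodes and at most 2n − 4 edges, independently of the alphabet size. -/

import Mathlib

/-- A rooted labeled tree on `n` nodes: node `0` is the root, every non-root
node `v` has a parent with smaller index, and `label v` is the character on
the edge between `v` and its parent. -/
structure LTree (n : ℕ) (A : Type*) where
  parent : Fin n → Fin n
  label : Fin n → A
  hp : ∀ v : Fin n, v.val ≠ 0 → (parent v).val < v.val

namespace LTree

variable {n : ℕ} {A : Type*}

/-- The string spelled by the path from node `v` up to the root
(read in the leaf-to-root direction). -/
def strUp (T : LTree n A) (v : Fin n) : List A :=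
  if h : v.val = 0 then []
  else T.label v :: T.strUp (T.parent v)
termination_by v.val
decreasing_by exact T.hp v h

/-- Substrings of the backward trie: strings spelled by upward paths from a
node to one of its ancestors (prefixes of the upward root-paths). -/
def SubstrU (T : LTree n A) : Set (List A) :=
  { s | ∃ (v : Fin n) (m : ℕ), s = (T.strUp v).take m }

/-- Substrings of the forward trie: strings spelled by downward paths from a
node to one of its descendants. -/
def SubstrD (T : LTree n A) : Set (List A) :=
  { s | ∃ (v : Fin n) (m : ℕ), s = ((T.strUp v).take m).reverse }

/-- A node is a leaf if no (non-root) node has it as parent. -/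
def isLeaf (T : LTree n A) (v : Fin n) : Prop :=
  ∀ u : Fin n, u.val ≠ 0 → T.parent u ≠ v

/-- Suffixes of the forward trie: strings spelled by downward paths from any
node to a leaf below it. -/
def SuffixF (T : LTree n A) : Set (List A) :=
  { s | ∃ v : Fin n, T.isLeaf v ∧ ∃ m : ℕ, s = ((T.strUp v).take m).reverse }

/-- Suffixes of the backward trie: strings spelled by the paths from any
non-root node up to the root. -/
def SuffixB (T : LTree n A) : Set (List A) :=
  { s | ∃ v : Fin n, v.val ≠ 0 ∧ s = T.strUp v }

/-- The trie condition: out-going edges of each node (equivalently, edges to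
the children of each node) carry mutually distinct characters. -/
def isTrie (T : LTree n A) : Prop :=
  ∀ u v : Fin n, u.val ≠ 0 → v.val ≠ 0 →
    T.parent u = T.parent v → T.label u = T.label v → u = v

/-- `X` is right-maximal on the forward trie: it has two distinct right
extensions, or an occurrence ending at a leaf. -/
def rightMaximalF (T : LTree n A) (X : List A) : Prop :=
  (∃ a b : A, a ≠ b ∧ X ++ [a] ∈ T.SubstrD ∧ X ++ [b] ∈ T.SubstrD) ∨
  (∃ v : Fin n, T.isLeaf v ∧ ∃ m : ℕ, X = ((T.strUp v).take m).reverse)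

/-- `X` is left-maximal on the forward trie: it has two distinct left
extensions, or an occurrence beginning at the root. -/
def leftMaximalF (T : LTree n A) (X : List A) : Prop :=
  (∃ a b : A, a ≠ b ∧ (a :: X) ∈ T.SubstrD ∧ (b :: X) ∈ T.SubstrD) ∨
  (∃ v : Fin n, X = (T.strUp v).reverse)

/-- `Y` is left-maximal on the backward trie: two distinct left extensions,
or an occurrence beginning at a leaf. -/
def leftMaximalB (T : LTree n A) (Y : List A) : Prop :=
  (∃ a b : A, a ≠ b ∧ (a :: Y) ∈ T.SubstrU ∧ (b :: Y) ∈ T.SubstrU) ∨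
  (∃ v : Fin n, T.isLeaf v ∧ ∃ m : ℕ, Y = (T.strUp v).take m)

/-- `Y` is right-maximal on the backward trie: two distinct right extensions,
or an occurrence ending at the root. -/
def rightMaximalB (T : LTree n A) (Y : List A) : Prop :=
  (∃ a b : A, a ≠ b ∧ Y ++ [a] ∈ T.SubstrU ∧ Y ++ [b] ∈ T.SubstrU) ∨
  (∃ v : Fin n, Y = T.strUp v)

end LTree


namespace LTree

variable {n : ℕ} {A : Type*}

lemma strUp_eq_cons (T : LTree n A) (v : Fin n) (h : v.val ≠ 0) :
    T.strUp v = T.label v :: T.strUp (T.parent v) := by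
  rw [strUp]; simp [h]

lemma prefix_getElem? {l1 l2 : List A} (h : l1 <+: l2) {i : ℕ} (hi : i < l1.length) :
    l2[i]? = l1[i]? := by
  obtain ⟨r, rfl⟩ := h
  rw [List.getElem?_append_left hi]

lemma mem_strUp_label (T : LTree n A) (v : Fin n) :
    ∀ x ∈ T.strUp v, ∃ u : Fin n, u.val ≠ 0 ∧ x = T.label u := by
  have key : ∀ (k : ℕ) (v : Fin n), v.val ≤ k → ∀ x ∈ T.strUp v,
      ∃ u : Fin n, u.val ≠ 0 ∧ x = T.label u := by
    intro k
    induction k with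
    | zero =>
      intro v hv x hx
      rw [strUp, dif_pos (Nat.le_zero.mp hv)] at hx
      simp at hx
    | succ k ih =>
      intro v hv x hx
      by_cases h : v.val = 0
      · rw [strUp, dif_pos h] at hx; simp at hx
      · rw [strUp_eq_cons T v h] at hx
        rcases List.mem_cons.mp hx with rfl | hx'
        · exact ⟨v, h, rfl⟩
        · exact ih (T.parent v) (by have := T.hp v h; omega) x hx'
  exact key v.val v le_rfl

lemma suffixB_eq_image (T : LTree n A) :
    T.SuffixB = T.strUp '' {v | v.val ≠ 0} := by
  ext s
  constructor
  · rintro ⟨v, hv, rfl⟩; exact ⟨v, hv, rfl⟩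
  · rintro ⟨v, hv, rfl⟩; exact ⟨v, hv, rfl⟩

lemma ncard_nonzero (hn : 1 ≤ n) : {v : Fin n | v.val ≠ 0}.ncard = n - 1 := by
  have h0 : (0:ℕ) < n := hn
  have he : {v : Fin n | v.val ≠ 0} = Set.univ \ {(⟨0, h0⟩ : Fin n)} := by
    ext v; simp [Fin.ext_iff]
  rw [he, Set.ncard_diff (Set.subset_univ _), Set.ncard_univ, Set.ncard_singleton]
  simp [Nat.card_eq_fintype_card]

lemma ncard_nonzero_one (hn : 3 ≤ n) :
    {v : Fin n | v.val ≠ 0 ∧ v.val ≠ 1}.ncard = n - 2 := by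
  have he : {v : Fin n | v.val ≠ 0 ∧ v.val ≠ 1} =
      Set.univ \ {(⟨0, by omega⟩ : Fin n), (⟨1, by omega⟩ : Fin n)} := by
    ext v; simp [Fin.ext_iff]
  rw [he, Set.ncard_diff (Set.subset_univ _), Set.ncard_univ,
    Set.ncard_pair (by simp [Fin.ext_iff])]
  simp [Nat.card_eq_fintype_card]

lemma br_ncard (T : LTree n A) (hn : 3 ≤ n) :
    {P : List A | ∃ a b : A, a ≠ b ∧ (∃ s ∈ T.SuffixB, P ++ [a] <+: s) ∧
        (∃ s ∈ T.SuffixB, P ++ [b] <+: s)}.ncard ≤ n - 2 := by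
  classical
  set Br := {P : List A | ∃ a b : A, a ≠ b ∧ (∃ s ∈ T.SuffixB, P ++ [a] <+: s) ∧
      (∃ s ∈ T.SuffixB, P ++ [b] <+: s)} with hBrdef
  set Ext : List A → Set (Fin n) := fun P =>
    {v | v.val ≠ 0 ∧ P <+: T.strUp v ∧ P.length < (T.strUp v).length} with hExtdef
  set minOf : Set (Fin n) → Fin n := fun s =>
    if h : s.Nonempty then (s.toFinite.toFinset).min'
      ((Set.Finite.toFinset_nonempty _).mpr h)
    else ⟨0, by omega⟩ with hminOf
  have minOf_mem : ∀ s : Set (Fin n), s.Nonempty → minOf s ∈ s := by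
    intro s hs
    have h := Finset.min'_mem (s.toFinite.toFinset)
      ((Set.Finite.toFinset_nonempty _).mpr hs)
    rw [Set.Finite.mem_toFinset] at h
    simpa [hminOf, dif_pos hs] using h
  have minOf_le : ∀ (s : Set (Fin n)) (v : Fin n), v ∈ s → minOf s ≤ v := by
    intro s v hv
    have hs : s.Nonempty := ⟨v, hv⟩
    simp only [hminOf, dif_pos hs]
    exact Finset.min'_le _ _ ((Set.Finite.mem_toFinset _).mpr hv)
  set Ext2 : List A → Set (Fin n) := fun P =>
    {v | v ∈ Ext P ∧ (T.strUp v)[P.length]? ≠ (T.strUp (minOf (Ext P)))[P.length]?}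
    with hExt2def
  set φ : List A → Fin n := fun P => minOf (Ext2 P) with hφdef
  have extmem : ∀ (P : List A) (c : A), (∃ s ∈ T.SuffixB, P ++ [c] <+: s) →
      ∃ v, v ∈ Ext P ∧ (T.strUp v)[P.length]? = some c := by
    rintro P c ⟨s, ⟨v, hv, rfl⟩, hp⟩
    have hlen : P.length + 1 ≤ (T.strUp v).length := by
      have := hp.length_le; simpa using this
    refine ⟨v, ⟨hv, (List.prefix_append P [c]).trans hp, by omega⟩, ?_⟩
    have h1 : (T.strUp v)[P.length]? = (P ++ [c])[P.length]? :=
      prefix_getElem? hp (by simp)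
    rw [h1, List.getElem?_concat_length]
  have ext2ne : ∀ P ∈ Br, (Ext2 P).Nonempty := by
    rintro P ⟨a, b, hab, ha, hb⟩
    obtain ⟨va, hva, hca⟩ := extmem P a ha
    obtain ⟨vb, hvb, hcb⟩ := extmem P b hb
    by_cases h : (T.strUp va)[P.length]? = (T.strUp (minOf (Ext P)))[P.length]?
    · refine ⟨vb, hvb, ?_⟩
      rw [hcb, ← h, hca]
      intro hc; exact hab (Option.some_injective _ hc).symm
    · exact ⟨va, hva, h⟩
  have key : ∀ P ∈ Br, ∀ Q ∈ Br, φ P = φ Q → P.length < Q.length → False := by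
    intro P hP Q hQ hφ hlt
    have hiP : φ P ∈ Ext2 P := minOf_mem _ (ext2ne P hP)
    have hiQ : φ P ∈ Ext2 Q := by rw [hφ]; exact minOf_mem _ (ext2ne Q hQ)
    obtain ⟨⟨hi0, hiPpre, hiPlen⟩, hiPne⟩ := hiP
    obtain ⟨⟨_, hiQpre, hiQlen⟩, hiQne⟩ := hiQ
    have hPQpre : P <+: Q := List.prefix_of_prefix_length_le hiPpre hiQpre (le_of_lt hlt)
    have hQExtne : (Ext Q).Nonempty := ⟨φ P, hi0, hiQpre, hiQlen⟩
    have hjQ : minOf (Ext Q) ∈ Ext Q := minOf_mem _ hQExtne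
    obtain ⟨hj0, hjpre, hjlen⟩ := hjQ
    have hjE : minOf (Ext Q) ∈ Ext P := ⟨hj0, hPQpre.trans hjpre, by omega⟩
    have e1 : (T.strUp (minOf (Ext Q)))[P.length]? = Q[P.length]? :=
      prefix_getElem? hjpre hlt
    have e2 : (T.strUp (φ P))[P.length]? = Q[P.length]? :=
      prefix_getElem? hiQpre hlt
    have hjE2 : minOf (Ext Q) ∈ Ext2 P := ⟨hjE, by rw [e1, ← e2]; exact hiPne⟩
    have h1 : φ P ≤ minOf (Ext Q) := minOf_le _ _ hjE2
    have h2 : minOf (Ext Q) ≤ φ P := minOf_le _ _ ⟨hi0, hiQpre, hiQlen⟩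
    have heq : minOf (Ext Q) = φ P := le_antisymm h2 h1
    exact hiQne (by rw [heq])
  have hmaps : ∀ P ∈ Br, φ P ∈ {v : Fin n | v.val ≠ 0 ∧ v.val ≠ 1} := by
    intro P hP
    have hm : φ P ∈ Ext2 P := minOf_mem _ (ext2ne P hP)
    obtain ⟨⟨h0, hpre, hlen⟩, hne⟩ := hm
    refine ⟨h0, ?_⟩
    intro h1
    have hp0 : (T.parent (φ P)).val = 0 := by
      have := T.hp (φ P) (by omega); omega
    have hs1 : T.strUp (φ P) = [T.label (φ P)] := by
      rw [strUp_eq_cons T (φ P) (by omega), strUp, dif_pos hp0]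
    have hP0 : P.length = 0 := by rw [hs1] at hlen; simpa using hlen
    have hmE : (Ext P).Nonempty := ⟨φ P, h0, hpre, hlen⟩
    have hmem : minOf (Ext P) ∈ Ext P := minOf_mem _ hmE
    have hle : minOf (Ext P) ≤ φ P := minOf_le _ _ ⟨h0, hpre, hlen⟩
    have heq : minOf (Ext P) = φ P := by
      have h0' := hmem.1
      apply Fin.ext
      have := Fin.le_def.mp hle
      omega
    exact hne (by rw [heq])
  have hinj : Set.InjOn φ Br := by
    intro P hP Q hQ hφ
    by_contra hne'
    rcases lt_trichotomy P.length Q.length with h | h | h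
    · exact key P hP Q hQ hφ h
    · have hiP : φ P ∈ Ext2 P := minOf_mem _ (ext2ne P hP)
      have hiQ : φ P ∈ Ext2 Q := by rw [hφ]; exact minOf_mem _ (ext2ne Q hQ)
      have hpre : P <+: Q :=
        List.prefix_of_prefix_length_le hiP.1.2.1 hiQ.1.2.1 (le_of_eq h)
      exact hne' (hpre.eq_of_length h)
    · exact key Q hQ P hP hφ.symm h
  have hcard := Set.ncard_le_ncard_of_injOn φ hmaps hinj (Set.toFinite _)
  rwa [ncard_nonzero_one hn] at hcard

end LTree

/-- The node set of the suffix tree of the backward trie: prefixes of suffixes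
that are branching, or suffixes that are maximal w.r.t. the prefix order
(the leaves), or the empty string (the root). -/
def STreeNodesB {n : ℕ} {A : Type*} (T : LTree n A) : Set (List A) :=
  {P | (∃ s ∈ T.SuffixB, P <+: s) ∧
    ((∃ a b : A, a ≠ b ∧ (∃ s ∈ T.SuffixB, P ++ [a] <+: s) ∧
        (∃ s ∈ T.SuffixB, P ++ [b] <+: s)) ∨
     (P ∈ T.SuffixB ∧ ∀ s ∈ T.SuffixB, P <+: s → P = s) ∨
     P = [])}

/-- for any backward trie with `n ≥ 3` nodes, its suffix tree has
at most `2n - 3` nodes and at most `2n - 4` edges (one edge per non-root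
node), independently of the alphabet size. -/
theorem stmt5 {n : ℕ} {A : Type*} (T : LTree n A) (hn : 3 ≤ n) :
    (STreeNodesB T).ncard ≤ 2 * n - 3 ∧
    (STreeNodesB T).ncard - 1 ≤ 2 * n - 4 := by
  classical
  have hS_fin : T.SuffixB.Finite := by
    rw [LTree.suffixB_eq_image]; exact (Set.toFinite _).image _
  have hS_card : T.SuffixB.ncard ≤ n - 1 := by
    rw [LTree.suffixB_eq_image]
    calc (T.strUp '' {v | v.val ≠ 0}).ncard ≤ {v : Fin n | v.val ≠ 0}.ncard :=
          Set.ncard_image_le (Set.toFinite _)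
      _ = n - 1 := LTree.ncard_nonzero (by omega)
  set Br := {P : List A | ∃ a b : A, a ≠ b ∧ (∃ s ∈ T.SuffixB, P ++ [a] <+: s) ∧
      (∃ s ∈ T.SuffixB, P ++ [b] <+: s)} with hBrdef
  set M := {P : List A | P ∈ T.SuffixB ∧ ∀ s ∈ T.SuffixB, P <+: s → P = s} with hMdef
  have hM_sub : M ⊆ T.SuffixB := fun P hP => hP.1
  have hM_fin : M.Finite := hS_fin.subset hM_sub
  have hM_card : M.ncard ≤ n - 1 :=
    le_trans (Set.ncard_le_ncard hM_sub hS_fin) hS_card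
  have hPre_fin : {t : List A | ∃ s ∈ T.SuffixB, t <+: s}.Finite := by
    have he : {t : List A | ∃ s ∈ T.SuffixB, t <+: s} =
        ⋃ s ∈ T.SuffixB, {t | t <+: s} := by
      ext t; simp
    rw [he]
    exact hS_fin.biUnion (fun s _ => by
      have he2 : {t : List A | t <+: s} = {t | t ∈ s.inits} := by
        ext t; simp [List.mem_inits]
      rw [he2]; exact s.inits.finite_toSet)
  have hBr_sub : Br ⊆ {t : List A | ∃ s ∈ T.SuffixB, t <+: s} := by
    rintro P ⟨a, b, hab, ⟨s, hs, hp⟩, -⟩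
    exact ⟨s, hs, (List.prefix_append P [a]).trans hp⟩
  have hBr_fin : Br.Finite := hPre_fin.subset hBr_sub
  have hmain : (STreeNodesB T).ncard ≤ 2 * n - 3 := by
    by_cases hlab : ∃ u w : Fin n, u.val ≠ 0 ∧ w.val ≠ 0 ∧ T.label u ≠ T.label w
    · obtain ⟨u, w, hu, hw, huw⟩ := hlab
      have hnil : ([] : List A) ∈ Br := by
        refine ⟨T.label u, T.label w, huw,
          ⟨T.strUp u, ⟨u, hu, rfl⟩, ?_⟩, ⟨T.strUp w, ⟨w, hw, rfl⟩, ?_⟩⟩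
        · rw [LTree.strUp_eq_cons T u hu]; simp
        · rw [LTree.strUp_eq_cons T w hw]; simp
      have hsub : STreeNodesB T ⊆ Br ∪ M := by
        rintro P ⟨hpre, h | h | rfl⟩
        · exact Or.inl h
        · exact Or.inr h
        · exact Or.inl hnil
      have h1 : (STreeNodesB T).ncard ≤ Br.ncard + M.ncard :=
        le_trans (Set.ncard_le_ncard hsub (hBr_fin.union hM_fin))
          (Set.ncard_union_le _ _)
      have h2 : Br.ncard ≤ n - 2 := LTree.br_ncard T hn
      omega
    · push_neg at hlab
      set c := T.label (⟨1, by omega⟩ : Fin n) with hc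
      have hall : ∀ (v : Fin n), ∀ x ∈ T.strUp v, x = c := by
        intro v x hx
        obtain ⟨u', hu', rfl⟩ := LTree.mem_strUp_label T v x hx
        exact hlab u' ⟨1, by omega⟩ hu' (by simp)
      have hrep : ∀ v : Fin n, T.strUp v = List.replicate (T.strUp v).length c := by
        intro v
        exact List.eq_replicate_iff.mpr ⟨by simp, fun x hx => hall v x hx⟩
      have hrep_pre : ∀ v w : Fin n,
          (T.strUp v).length ≤ (T.strUp w).length → T.strUp v <+: T.strUp w := by
        intro v w hle
        rw [hrep v, hrep w]
        refine ⟨List.replicate ((T.strUp w).length - (T.strUp v).length) c, ?_⟩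
        rw [List.replicate_append_replicate]
        congr 1
        omega
      have hM1 : M.ncard ≤ 1 := by
        rw [Set.ncard_le_one hM_fin]
        rintro s ⟨⟨vs, hvs, rfl⟩, hsmax⟩ t ⟨⟨vt, hvt, rfl⟩, htmax⟩
        rcases le_total (T.strUp vs).length (T.strUp vt).length with h | h
        · exact hsmax _ ⟨vt, hvt, rfl⟩ (hrep_pre vs vt h)
        · exact (htmax _ ⟨vs, hvs, rfl⟩ (hrep_pre vt vs h)).symm
      have hBr0 : ∀ P : List A, P ∉ Br := by
        rintro P ⟨a, b, hab, ⟨s, ⟨vs, hvs, rfl⟩, hpa⟩, ⟨t, ⟨vt, hvt, rfl⟩, hpb⟩⟩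
        have ha : a = c := hall vs a (hpa.mem (by simp))
        have hb : b = c := hall vt b (hpb.mem (by simp))
        exact hab (ha.trans hb.symm)
      have hsub : STreeNodesB T ⊆ M ∪ {([] : List A)} := by
        rintro P ⟨hpre, h | h | rfl⟩
        · exact absurd h (hBr0 P)
        · exact Or.inl h
        · exact Or.inr rfl
      have h1 : (STreeNodesB T).ncard ≤ M.ncard + 1 := by
        refine le_trans (Set.ncard_le_ncard hsub (hM_fin.union (Set.finite_singleton _))) ?_
        refine le_trans (Set.ncard_union_le _ _) ?_
        simp
      omega
  exact ⟨hmain, by omega⟩
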